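/- Let f : ℝ^d → ℝ ∪ {+∞} be proper. Suppose x = Σ_{j=1}^N λ_j x^j where N ≥ 1, each λ_j > 0, Σ_{j=1}^N λ_j = 1, each f(x^j) < +∞, and f**(x) = Σ_{j=1}^N λ_j f(x^j). Then f(x^j) = f**(x^j) for every j, and every subgradient of f** at x is also a subgradient of f** at x^j for every j. -/

import Mathlib

open scoped RealInnerProductSpace
noncomputable section

/-- `ℝ^d` with the Euclidean inner product and norm. -/
abbrev Evec (d : ℕ) := EuclideanSpace ℝ (Fin d)

/-- The convex conjugate of a function `f : ℝ^d → EReal`. -/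
def conjF {d : ℕ} (f : Evec d → EReal) (y : Evec d) : EReal :=
  ⨆ x : Evec d, ((⟪x, y⟫ : ℝ) : EReal) - f x

/-- The biconjugate (convex envelope) of `f`. -/
def biconjF {d : ℕ} (f : Evec d → EReal) (x : Evec d) : EReal :=
  ⨆ y : Evec d, ((⟪x, y⟫ : ℝ) : EReal) - conjF f y

/-- `v` is a subgradient of `f**` at `x`. -/
def IsSubgradF {d : ℕ} (f : Evec d → EReal) (v x : Evec d) : Prop :=
  ∀ w : Evec d, biconjF f x + ((⟪v, w - x⟫ : ℝ) : EReal) ≤ biconjF f w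

/- ### Auxiliary lemmas -/

lemma ereal_coe_sum {α : Type*} (s : Finset α) (g : α → ℝ) :
    ((∑ j ∈ s, g j : ℝ) : EReal) = ∑ j ∈ s, ((g j : ℝ) : EReal) := by
  classical
  induction s using Finset.induction with
  | empty => simp
  | insert _ _ h ih => rw [Finset.sum_insert h, Finset.sum_insert h, ← ih, EReal.coe_add]

lemma ereal_mul_left_cancel {c : ℝ} (hc : 0 < c) {u v : EReal}
    (h : (c : EReal) * u = (c : EReal) * v) : u = v := by
  have hb : (c : EReal) ≠ ⊥ := EReal.coe_ne_bot c
  have ht : (c : EReal) ≠ ⊤ := EReal.coe_ne_top c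
  have h0 : (c : EReal) ≠ 0 := by
    simp only [ne_eq, EReal.coe_eq_zero]; exact hc.ne'
  have key : ∀ w : EReal, ((c : EReal) * w) / (c : EReal) = w := fun w => by
    rw [← EReal.mul_div, EReal.mul_div_cancel hb ht h0]
  rw [← key u, ← key v, h]

lemma real_sum_eq_term_eq {N : ℕ} {u w : Fin N → ℝ} (h : ∀ j, u j ≤ w j)
    (hs : ∑ j, u j = ∑ j, w j) : ∀ j, u j = w j := by
  intro j
  by_contra hne
  have : ∑ j, u j < ∑ j, w j :=
    Finset.sum_lt_sum (fun i _ => h i) ⟨j, Finset.mem_univ j, lt_of_le_of_ne (h j) hne⟩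
  exact absurd hs this.ne

lemma biconj_le_self {d : ℕ} (f : Evec d → EReal) (z : Evec d) (hz : f z ≠ ⊥) :
    biconjF f z ≤ f z := by
  refine iSup_le fun y => ?_
  have h1 : ((⟪z, y⟫ : ℝ) : EReal) - f z ≤ conjF f y :=
    le_iSup (fun x => ((⟪x, y⟫ : ℝ) : EReal) - f x) z
  rcases eq_or_ne (f z) ⊤ with h | h
  · rw [h]; exact le_top
  · obtain ⟨r, hr⟩ : ∃ r : ℝ, f z = (r : EReal) :=
      ⟨(f z).toReal, (EReal.coe_toReal h hz).symm⟩
    rw [hr] at h1 ⊢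
    calc ((⟪z, y⟫ : ℝ) : EReal) - conjF f y
        ≤ ((⟪z, y⟫ : ℝ) : EReal) - (((⟪z, y⟫ : ℝ) : EReal) - (r : EReal)) :=
          EReal.sub_le_sub (le_refl _) h1
      _ = (r : EReal) := by
          rw [← EReal.coe_sub, ← EReal.coe_sub]
          norm_num

lemma le_biconj {d : ℕ} (f : Evec d → EReal) (z y : Evec d) :
    ((⟪z, y⟫ : ℝ) : EReal) - conjF f y ≤ biconjF f z :=
  le_iSup (fun y => ((⟪z, y⟫ : ℝ) : EReal) - conjF f y) y

lemma conj_ne_bot {d : ℕ} (f : Evec d → EReal) (hbot : ∀ x : Evec d, f x ≠ ⊥)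
    (hproper : ∃ x : Evec d, f x ≠ ⊤) (y : Evec d) : conjF f y ≠ ⊥ := by
  obtain ⟨x₀, hx₀⟩ := hproper
  have h1 : ((⟪x₀, y⟫ : ℝ) : EReal) - f x₀ ≤ conjF f y :=
    le_iSup (fun x => ((⟪x, y⟫ : ℝ) : EReal) - f x) x₀
  obtain ⟨r, hr⟩ : ∃ r : ℝ, f x₀ = (r : EReal) :=
    ⟨(f x₀).toReal, (EReal.coe_toReal hx₀ (hbot x₀)).symm⟩
  rw [hr, ← EReal.coe_sub] at h1
  intro hc
  rw [hc, le_bot_iff] at h1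
  exact EReal.coe_ne_bot _ h1

/-- If `x = Σ λ_j x^j` is a convex combination with positive weights,
each `f(x^j) < +∞`, and `f**(x) = Σ λ_j f(x^j)`, then `f = f**` at every `x^j`, and
every subgradient of `f**` at `x` is a subgradient of `f**` at each `x^j`. -/
theorem envelope_decomposition_subgradients
    {d : ℕ} (f : Evec d → EReal)
    (hbot : ∀ x : Evec d, f x ≠ ⊥) (hproper : ∃ x : Evec d, f x ≠ ⊤)
    (N : ℕ) (hN : 1 ≤ N) (lam : Fin N → ℝ) (pts : Fin N → Evec d)
    (hlam : ∀ j, 0 < lam j) (hsum : ∑ j, lam j = 1)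
    (hfin : ∀ j, f (pts j) ≠ ⊤)
    (x : Evec d) (hx : x = ∑ j, lam j • pts j)
    (henv : biconjF f x = ∑ j, ((lam j : ℝ) : EReal) * f (pts j)) :
    (∀ j, f (pts j) = biconjF f (pts j)) ∧
    ∀ v : Evec d, IsSubgradF f v x → ∀ j, IsSubgradF f v (pts j) := by
  classical
  set F := biconjF f with hF
  -- real values of f at the points
  set φ : Fin N → ℝ := fun j => (f (pts j)).toReal with hφ
  have hφ' : ∀ j, f (pts j) = ((φ j : ℝ) : EReal) := fun j =>
    (EReal.coe_toReal (hfin j) (hbot _)).symm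
  -- inner products decompose
  have hinner : ∀ y : Evec d, (⟪x, y⟫ : ℝ) = ∑ j, lam j * ⟪pts j, y⟫ := by
    intro y
    rw [hx, sum_inner]
    exact Finset.sum_congr rfl fun j _ => real_inner_smul_left _ _ _
  -- Step B : F x ≤ ∑ λ_j • F (pts j)
  have hconv : F x ≤ ∑ j, ((lam j : ℝ) : EReal) * F (pts j) := by
    refine iSup_le fun y => ?_
    rcases eq_or_ne (conjF f y) ⊤ with hc | hc
    · rw [hc, EReal.sub_top]; exact bot_le
    · obtain ⟨c, hcr⟩ : ∃ c : ℝ, conjF f y = (c : EReal) :=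
        ⟨(conjF f y).toReal, (EReal.coe_toReal hc (conj_ne_bot f hbot hproper y)).symm⟩
      rw [hcr, ← EReal.coe_sub]
      have hsplit : (⟪x, y⟫ : ℝ) - c = ∑ j, lam j * ((⟪pts j, y⟫ : ℝ) - c) := by
        simp only [mul_sub]
        rw [Finset.sum_sub_distrib, ← Finset.sum_mul, hsum, one_mul, ← hinner y]
      rw [hsplit, ereal_coe_sum]
      refine Finset.sum_le_sum fun j _ => ?_
      rw [EReal.coe_mul]
      refine mul_le_mul_of_nonneg_left ?_ (by exact_mod_cast (hlam j).le)
      calc ((((⟪pts j, y⟫ : ℝ) - c : ℝ)) : EReal)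
          = ((⟪pts j, y⟫ : ℝ) : EReal) - ((c : ℝ) : EReal) := EReal.coe_sub _ _
        _ = ((⟪pts j, y⟫ : ℝ) : EReal) - conjF f y := by rw [hcr]
        _ ≤ F (pts j) := le_biconj f (pts j) y
  -- Step A : F (pts j) ≤ f (pts j)
  have hle : ∀ j, F (pts j) ≤ f (pts j) := fun j => biconj_le_self f (pts j) (hbot _)
  -- termwise : each F (pts j) is real and equals φ j
  have hsum_eq : ∑ j, ((lam j : ℝ) : EReal) * F (pts j)
      = ∑ j, ((lam j : ℝ) : EReal) * f (pts j) := by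
    refine le_antisymm ?_ (henv ▸ hconv)
    exact Finset.sum_le_sum fun j _ =>
      mul_le_mul_of_nonneg_left (hle j) (by exact_mod_cast (hlam j).le)
  -- no F (pts j) can be ⊥
  have hFreal : ∀ j, F (pts j) = (((F (pts j)).toReal : ℝ) : EReal) := by
    intro j
    refine (EReal.coe_toReal ?_ ?_).symm
    · exact ne_top_of_le_ne_top (by rw [hφ' j]; exact EReal.coe_ne_top _) (hle j)
    · intro hFbot
      have hterm : ((lam j : ℝ) : EReal) * F (pts j) = ⊥ := by
        rw [hFbot]; exact EReal.coe_mul_bot_of_pos (hlam j)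
      have hsb : ∑ i, ((lam i : ℝ) : EReal) * F (pts i) = ⊥ := by
        rw [← Finset.add_sum_erase _ _ (Finset.mem_univ j), hterm, EReal.bot_add]
      rw [hsum_eq] at hsb
      have : ∑ i, ((lam i : ℝ) : EReal) * f (pts i)
          = ((∑ i, lam i * φ i : ℝ) : EReal) := by
        rw [ereal_coe_sum]
        exact Finset.sum_congr rfl fun i _ => by rw [hφ' i, EReal.coe_mul]
      rw [this] at hsb
      exact EReal.coe_ne_bot _ hsb
  set ψ : Fin N → ℝ := fun j => (F (pts j)).toReal with hψ
  have hψle : ∀ j, ψ j ≤ φ j := by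
    intro j
    have := hle j
    rw [hFreal j, hφ' j, EReal.coe_le_coe_iff] at this
    exact this
  have hsums : ∑ j, lam j * ψ j = ∑ j, lam j * φ j := by
    have : ((∑ j, lam j * ψ j : ℝ) : EReal) = ((∑ j, lam j * φ j : ℝ) : EReal) := by
      rw [ereal_coe_sum, ereal_coe_sum]
      calc ∑ j, ((lam j * ψ j : ℝ) : EReal)
          = ∑ j, ((lam j : ℝ) : EReal) * F (pts j) := by
            refine Finset.sum_congr rfl fun j _ => ?_
            rw [hFreal j, EReal.coe_mul]
        _ = ∑ j, ((lam j : ℝ) : EReal) * f (pts j) := hsum_eq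
        _ = ∑ j, ((lam j * φ j : ℝ) : EReal) := by
            refine Finset.sum_congr rfl fun j _ => ?_
            rw [hφ' j, EReal.coe_mul]
    exact_mod_cast this
  have hterm_eq : ∀ j, lam j * ψ j = lam j * φ j :=
    real_sum_eq_term_eq (fun j => mul_le_mul_of_nonneg_left (hψle j) (hlam j).le) hsums
  have hψφ : ∀ j, ψ j = φ j := fun j =>
    mul_left_cancel₀ (hlam j).ne' (hterm_eq j)
  have hpart1 : ∀ j, f (pts j) = F (pts j) := by
    intro j
    rw [hφ' j, hFreal j]
    show ((φ j : ℝ) : EReal) = ((ψ j : ℝ) : EReal)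
    exact_mod_cast (hψφ j).symm
  refine ⟨hpart1, ?_⟩
  -- Part 2
  -- F x is real
  have hFx : F x = ((∑ j, lam j * φ j : ℝ) : EReal) := by
    rw [henv, ereal_coe_sum]
    exact Finset.sum_congr rfl fun j _ => by rw [hφ' j, EReal.coe_mul]
  set A : ℝ := ∑ j, lam j * φ j with hA
  intro v hv j w
  -- subgradient inequality at each point, in real form
  have hsub : ∀ k, A + ⟪v, pts k - x⟫ ≤ φ k := by
    intro k
    have := hv (pts k)
    rw [← hF, hFx, ← hpart1 k, hφ' k, ← EReal.coe_add, EReal.coe_le_coe_iff] at this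
    exact this
  -- weighted sum of the LHS equals A
  have hwsum : ∑ k, lam k * (A + ⟪v, pts k - x⟫) = A := by
    have hxin : ∑ k, lam k * ⟪v, pts k - x⟫ = 0 := by
      have : ∑ k, lam k * ⟪v, pts k - x⟫ = ⟪v, (∑ k, lam k • pts k) - x⟫ := by
        rw [inner_sub_right, inner_sum]
        simp only [real_inner_smul_right, inner_sub_right, mul_sub]
        rw [Finset.sum_sub_distrib, ← Finset.sum_mul, hsum, one_mul]
      rw [this, ← hx, sub_self, inner_zero_right]
    simp only [mul_add]
    rw [Finset.sum_add_distrib, ← Finset.sum_mul, hsum, one_mul, hxin, add_zero]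
  have hwsum2 : ∑ k, lam k * φ k = A := hA.symm
  have heq : ∀ k, lam k * (A + ⟪v, pts k - x⟫) = lam k * φ k :=
    real_sum_eq_term_eq
      (fun k => mul_le_mul_of_nonneg_left (hsub k) (hlam k).le)
      (by rw [hwsum, hwsum2])
  have heq' : ∀ k, A + ⟪v, pts k - x⟫ = φ k := fun k =>
    mul_left_cancel₀ (hlam k).ne' (heq k)
  -- conclude
  have hkey : F (pts j) + ((⟪v, w - pts j⟫ : ℝ) : EReal)
      = F x + ((⟪v, w - x⟫ : ℝ) : EReal) := by
    rw [← hpart1 j, hφ' j, hFx, ← EReal.coe_add, ← EReal.coe_add, EReal.coe_eq_coe_iff]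
    rw [← heq' j]
    have : ⟪v, pts j - x⟫ + ⟪v, w - pts j⟫ = ⟪v, w - x⟫ := by
      rw [← inner_add_right]
      congr 1
      abel
    linarith [this]
  rw [← hF, hkey]
  exact hv w
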